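/- If all input trees T_1, …, T_k share the same leaf set X, then for every nonempty A ⊆ X the triplet-based supertree concordance factor of A (the proportion, among trees containing at least one triple (a,a',b) with a,a' ∈ A, b ∉ A, of those trees T_i for which aa'|_i b holds for all such triples present in T_i) equals the consensus concordance factor of A (the proportion of trees containing A as a cluster). -/

import Mathlib

def IsHierarchyOn {α : Type*} [DecidableEq α] (X : Finset α) (T : Finset (Finset α)) : Prop :=
  (∀ A ∈ T, A ⊆ X ∧ A.Nonempty) ∧ X ∈ T ∧ (∀ x ∈ X, ({x} : Finset α) ∈ T) ∧
  ∀ A ∈ T, ∀ B ∈ T, A ∩ B = ∅ ∨ A ⊆ B ∨ B ⊆ A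

def leaves {α : Type*} [DecidableEq α] (T : Finset (Finset α)) : Finset α := T.sup id

/-- The triplet-based supertree concordance factor of `A ⊆ X`: `1` if `A = X` or `A` is a
singleton; otherwise the proportion, among trees containing some triple `(a, a', b)` with
`a, a' ∈ A` distinct and `b ∈ X ∖ A`, of those trees supporting `aa'|b` (some cluster
contains `a, a'` but not `b`) for every such triple present in the tree. -/
noncomputable def supcf {α : Type*} [DecidableEq α] (X : Finset α) {k : ℕ}
    (trees : Fin k → Finset (Finset α)) (A : Finset α) : ℝ :=
  if A = X ∨ A.card = 1 then 1
  else
    let den := Finset.univ.filter fun i : Fin k =>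
      ∃ a ∈ A, ∃ a' ∈ A, ∃ b ∈ X \ A, a ≠ a' ∧ ({a, a', b} : Finset α) ⊆ leaves (trees i)
    let num := den.filter fun i =>
      ∀ a ∈ A, ∀ a' ∈ A, ∀ b ∈ X \ A, a ≠ a' →
        ({a, a', b} : Finset α) ⊆ leaves (trees i) →
          ∃ C ∈ trees i, a ∈ C ∧ a' ∈ C ∧ b ∉ C
    if den.card = 0 then 0 else (num.card : ℝ) / den.card

lemma exists_min_of_chain {α : Type*} [DecidableEq α] {F : Finset (Finset α)}
    (hne : F.Nonempty) (hchain : ∀ B ∈ F, ∀ C ∈ F, B ⊆ C ∨ C ⊆ B) :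
    ∃ S ∈ F, ∀ B ∈ F, S ⊆ B := by
  obtain ⟨S, hS, hmin⟩ := F.exists_minimal hne
  refine ⟨S, hS, fun B hB => ?_⟩
  rcases hchain S hS B hB with h | h
  · exact h
  · rcases (Finset.le_iff_subset.mpr h).eq_or_lt with h' | h'
    · exact le_of_eq h'.symm
    · exact absurd h' (not_lt_of_ge (hmin hB h))

lemma exists_max_of_chain {α : Type*} [DecidableEq α] {F : Finset (Finset α)}
    (hne : F.Nonempty) (hchain : ∀ B ∈ F, ∀ C ∈ F, B ⊆ C ∨ C ⊆ B) :
    ∃ S ∈ F, ∀ B ∈ F, B ⊆ S := by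
  obtain ⟨S, hS, hmax⟩ := F.exists_maximal hne
  refine ⟨S, hS, fun B hB => ?_⟩
  rcases hchain B hB S hS with h | h
  · exact h
  · rcases (Finset.le_iff_subset.mpr h).eq_or_lt with h' | h'
    · exact le_of_eq h'.symm
    · exact absurd h' (not_lt_of_ge (hmax hB h))

lemma cluster_of_triples {α : Type*} [DecidableEq α] {X A : Finset α} {T : Finset (Finset α)}
    (hT : IsHierarchyOn X T) (hA : A ⊆ X) (hAne : A.Nonempty)
    (htrip : ∀ a ∈ A, ∀ a' ∈ A, ∀ b ∈ X \ A, a ≠ a' → ∃ C ∈ T, a ∈ C ∧ a' ∈ C ∧ b ∉ C) :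
    A ∈ T := by
  obtain ⟨hsub, hX, hsing, hcomp⟩ := hT
  have hchainF : ∀ B ∈ T.filter (fun C => A ⊆ C), ∀ C ∈ T.filter (fun C => A ⊆ C),
      B ⊆ C ∨ C ⊆ B := by
    intro B hB C hC
    rw [Finset.mem_filter] at hB hC
    rcases hcomp B hB.1 C hC.1 with h | h | h
    · exfalso
      obtain ⟨a, ha⟩ := hAne
      have : a ∈ B ∩ C := Finset.mem_inter.mpr ⟨hB.2 ha, hC.2 ha⟩
      simp [h] at this
    · exact Or.inl h
    · exact Or.inr h
  obtain ⟨S, hSF, hSmin⟩ := exists_min_of_chain ⟨X, Finset.mem_filter.mpr ⟨hX, hA⟩⟩ hchainF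
  rw [Finset.mem_filter] at hSF
  have hSA : S ⊆ A := by
    intro b hb
    by_contra hbA
    have hbX : b ∈ X := (hsub S hSF.1).1 hb
    obtain ⟨a, ha⟩ := hAne
    have hchainG : ∀ B ∈ T.filter (fun C => a ∈ C ∧ b ∉ C),
        ∀ C ∈ T.filter (fun C => a ∈ C ∧ b ∉ C), B ⊆ C ∨ C ⊆ B := by
      intro B hB C hC
      rw [Finset.mem_filter] at hB hC
      rcases hcomp B hB.1 C hC.1 with h | h | h
      · exfalso
        have : a ∈ B ∩ C := Finset.mem_inter.mpr ⟨hB.2.1, hC.2.1⟩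
        simp [h] at this
      · exact Or.inl h
      · exact Or.inr h
    have hGne : (T.filter (fun C => a ∈ C ∧ b ∉ C)).Nonempty := by
      refine ⟨{a}, Finset.mem_filter.mpr ⟨hsing a (hA ha), Finset.mem_singleton_self a, ?_⟩⟩
      simp only [Finset.mem_singleton]
      intro h
      exact hbA (h ▸ ha)
    obtain ⟨M, hMG, hMmax⟩ := exists_max_of_chain hGne hchainG
    rw [Finset.mem_filter] at hMG
    have hAM : A ⊆ M := by
      intro a' ha'
      by_cases h : a' = a
      · exact h ▸ hMG.2.1
      · obtain ⟨C, hC, haC, ha'C, hbC⟩ :=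
          htrip a ha a' ha' b (Finset.mem_sdiff.mpr ⟨hbX, hbA⟩) (Ne.symm h)
        exact hMmax C (Finset.mem_filter.mpr ⟨hC, haC, hbC⟩) ha'C
    have hSM : S ⊆ M := hSmin M (Finset.mem_filter.mpr ⟨hMG.1, hAM⟩)
    exact hMG.2.2 (hSM hb)
  have : A = S := Finset.Subset.antisymm hSF.2 hSA
  exact this ▸ hSF.1

/-- When all input trees share the leaf set `X`, the triplet-based supertree concordance
factor coincides with the consensus concordance factor (the proportion of trees containing
`A` as a cluster). -/
theorem stmt_18 {α : Type*} [DecidableEq α] (X : Finset α) {k : ℕ} (hk : 0 < k)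
    (trees : Fin k → Finset (Finset α))
    (htrees : ∀ i, IsHierarchyOn X (trees i)) (hleaves : ∀ i, leaves (trees i) = X)
    (A : Finset α) (hA : A ⊆ X) (hAne : A.Nonempty) :
    supcf X trees A = ((Finset.univ.filter fun i => A ∈ trees i).card : ℝ) / k := by
  by_cases h1 : A = X ∨ A.card = 1
  · have hall : ∀ i, A ∈ trees i := by
      intro i
      obtain ⟨hsub, hX, hsing, _⟩ := htrees i
      rcases h1 with rfl | h
      · exact hX
      · obtain ⟨x, rfl⟩ := Finset.card_eq_one.mp h
        exact hsing x (hA (Finset.mem_singleton_self x))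
    rw [supcf, if_pos h1]
    have : (Finset.univ.filter fun i => A ∈ trees i) = Finset.univ :=
      Finset.filter_true_of_mem (fun i _ => hall i)
    rw [this, Finset.card_univ, Fintype.card_fin]
    rw [div_self]
    exact_mod_cast hk.ne'
  · rw [supcf, if_neg h1]
    push_neg at h1
    obtain ⟨hAX, hcard⟩ := h1
    have h2 : 1 < A.card := lt_of_le_of_ne (Finset.one_le_card.mpr hAne) (Ne.symm hcard)
    obtain ⟨a, ha, a', ha', hne⟩ := Finset.one_lt_card.mp h2
    obtain ⟨b, hbX, hbA⟩ :=
      Finset.exists_of_ssubset (Finset.ssubset_iff_subset_ne.mpr ⟨hA, hAX⟩)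
    have hsubX : ∀ i (x y z : α), x ∈ X → y ∈ X → z ∈ X →
        ({x, y, z} : Finset α) ⊆ leaves (trees i) := by
      intro i x y z hx hy hz
      rw [hleaves i]
      intro w hw
      simp only [Finset.mem_insert, Finset.mem_singleton] at hw
      rcases hw with rfl | rfl | rfl
      · exact hx
      · exact hy
      · exact hz
    have hden : (Finset.univ.filter fun i : Fin k =>
        ∃ a ∈ A, ∃ a' ∈ A, ∃ b ∈ X \ A, a ≠ a' ∧
          ({a, a', b} : Finset α) ⊆ leaves (trees i)) = Finset.univ := by
      apply Finset.filter_true_of_mem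
      intro i _
      exact ⟨a, ha, a', ha', b, Finset.mem_sdiff.mpr ⟨hbX, hbA⟩, hne,
        hsubX i a a' b (hA ha) (hA ha') hbX⟩
    simp only [hden]
    have hnum : (Finset.univ.filter fun i : Fin k =>
        ∀ a ∈ A, ∀ a' ∈ A, ∀ b ∈ X \ A, a ≠ a' →
          ({a, a', b} : Finset α) ⊆ leaves (trees i) →
            ∃ C ∈ trees i, a ∈ C ∧ a' ∈ C ∧ b ∉ C)
        = Finset.univ.filter fun i => A ∈ trees i := by
      apply Finset.filter_congr
      intro i _
      constructor
      · intro h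
        apply cluster_of_triples (htrees i) hA hAne
        intro x hx y hy z hz hxy
        exact h x hx y hy z hz hxy
          (hsubX i x y z (hA hx) (hA hy) (Finset.mem_sdiff.mp hz).1)
      · intro hmem x hx y hy z hz _ _
        exact ⟨A, hmem, hx, hy, (Finset.mem_sdiff.mp hz).2⟩
    rw [hnum, Finset.card_univ, Fintype.card_fin, if_neg hk.ne']
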